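/- The fixed point of the h-adic contraction solves the Maurer–Cartan equation when the obstructions vanish: suppose x ∈ g¹ with d₁x = 0, and τ : {1,2,...} → g¹ satisfies τ₁ = x and τ_b = −(1/2) h₂([τ,τ]_b) for all b ≥ 2, and suppose the obstructions vanish: π₂([τ,τ]_b) = 0 for all b ≥ 1. Then τ satisfies the Maurer–Cartan equation degreewise, i.e. d₁τ_b + (1/2)[τ,τ]_b = 0 for all b ≥ 1. -/

import Mathlib

/-- Extension of a sequence indexed by {1,2,3,...} to ℕ by zero. -/
def ext {V : Type*} [AddCommGroup V] (a : ℕ+ → V) : ℕ → V :=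
  fun n => if h : 0 < n then a ⟨n, h⟩ else 0

/-- The convolution [τ,τ´]_b = Σ_{i+j=b, i,j≥1} [τ_i, τ´_j] of two sequences
with respect to a bilinear bracket (terms with index 0 vanish). -/
def bconv {K V W : Type*} [Field K] [AddCommGroup V] [Module K V]
    [AddCommGroup W] [Module K W]
    (Q : V →ₗ[K] V →ₗ[K] W) (a b : ℕ+ → V) (n : ℕ+) : W :=
  ∑ i ∈ Finset.range ((n : ℕ) + 1), Q (ext a i) (ext b ((n : ℕ) - i))

/-- The fixed point of the h-adic contraction solves the
Maurer–Cartan equation when the obstructions vanish: if d₁x = 0, τ₁ = x,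
τ_b = −(1/2)h₂([τ,τ]_b) for b ≥ 2, and π₂([τ,τ]_b) = 0 for all b ≥ 1, then
d₁τ_b + (1/2)[τ,τ]_b = 0 for all b ≥ 1. -/
theorem stmt14 (K : Type*) [Field K] [CharZero K]
    (g0 g1 g2 g3 H1 H2 : Type*)
    [AddCommGroup g0] [Module K g0] [AddCommGroup g1] [Module K g1]
    [AddCommGroup g2] [Module K g2] [AddCommGroup g3] [Module K g3]
    [AddCommGroup H1] [Module K H1] [AddCommGroup H2] [Module K H2]
    (d0 : g0 →ₗ[K] g1) (d1 : g1 →ₗ[K] g2) (d2 : g2 →ₗ[K] g3)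
    (h1 : g1 →ₗ[K] g0) (h2 : g2 →ₗ[K] g1) (h3 : g3 →ₗ[K] g2)
    (π1 : g1 →ₗ[K] H1) (n1 : H1 →ₗ[K] g1)
    (π2 : g2 →ₗ[K] H2) (n2 : H2 →ₗ[K] g2)
    (hdd1 : d1.comp d0 = 0) (hdd2 : d2.comp d1 = 0)
    (hSDR1 : d0.comp h1 + h2.comp d1 = LinearMap.id - n1.comp π1)
    (hSDR2 : d1.comp h2 + h3.comp d2 = LinearMap.id - n2.comp π2)
    (hside1 : h1.comp h2 = 0) (hside2 : π1.comp h2 = 0)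
    (hside3 : h1.comp n1 = 0) (hretr : π1.comp n1 = LinearMap.id)
    (hdn : d1.comp n1 = 0) (hπd : π2.comp d1 = 0)
    (br : g1 →ₗ[K] g1 →ₗ[K] g2) (hbrsymm : ∀ x y : g1, br x y = br y x)
    (β : g2 →ₗ[K] g1 →ₗ[K] g3)
    (hLeibniz : ∀ x y : g1, d2 (br x y) = β (d1 x) y + β (d1 y) x)
    (hJacobi : ∀ x y z : g1, β (br x y) z + β (br y z) x + β (br z x) y = 0)
    (x : g1) (hx : d1 x = 0) (τ : ℕ+ → g1) (hτ1 : τ 1 = x)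
    (hrec : ∀ b : ℕ+, 2 ≤ b → τ b = -((2 : K)⁻¹ • h2 (bconv br τ τ b)))
    (hobs : ∀ b : ℕ+, π2 (bconv br τ τ b) = 0) :
    ∀ b : ℕ+, d1 (τ b) + (2 : K)⁻¹ • bconv br τ τ b = 0 := by
  set T : ℕ → g1 := ext τ with hT
  have hT0 : T 0 = 0 := by simp [hT, ext]
  set C : ℕ → g2 := fun n => ∑ i ∈ Finset.range (n + 1), br (T i) (T (n - i)) with hC
  have hCb : ∀ b : ℕ+, bconv br τ τ b = C (b : ℕ) := fun b => rfl
  have hTn : ∀ n : ℕ, ∀ h : 0 < n, T n = τ ⟨n, h⟩ := by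
    intro n h; simp [hT, ext, h]
  have main : ∀ n : ℕ, d1 (T n) + (2 : K)⁻¹ • C n = 0 := by
    intro n
    induction n using Nat.strong_induction_on with
    | _ n IH => ?_
    match n, IH with
    | 0, _ =>
      simp [hT0, hC]
    | 1, _ =>
      have hT1 : T 1 = x := by rw [hTn 1 one_pos]; exact hτ1
      have hC1 : C 1 = 0 := by
        simp [hC, Finset.sum_range_succ, hT0]
      rw [hT1, hx, hC1, smul_zero, add_zero]
    | (m + 2), IH =>
      set n := m + 2 with hn
      have hnpos : 0 < n := by omega
      -- step 1: the big convolution sum of brackets with β vanishes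
      have hsum0 : ∑ i ∈ Finset.range (n + 1), β (C i) (T (n - i)) = 0 := by
        set A : Finset (ℕ × ℕ × ℕ) :=
          (Finset.range (n + 1) ×ˢ Finset.range (n + 1) ×ˢ Finset.range (n + 1)).filter
            (fun p => p.1 + p.2.1 + p.2.2 = n) with hA
        set F : ℕ × ℕ × ℕ → g3 := fun p => β (br (T p.1) (T p.2.1)) (T p.2.2) with hF
        have htriple : ∑ i ∈ Finset.range (n + 1), β (C i) (T (n - i)) = ∑ p ∈ A, F p := by
          have hexp : ∑ i ∈ Finset.range (n + 1), β (C i) (T (n - i))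
              = ∑ i ∈ Finset.range (n + 1), ∑ j ∈ Finset.range (i + 1),
                  β (br (T j) (T (i - j))) (T (n - i)) := by
            refine Finset.sum_congr rfl fun i _ => ?_
            simp only [hC, map_sum, LinearMap.coe_sum, Finset.sum_apply]
          rw [hexp, Finset.sum_sigma']
          refine Finset.sum_nbij' (fun p => (p.2, p.1 - p.2, n - p.1))
            (fun q => ⟨q.1 + q.2.1, q.1⟩) ?_ ?_ ?_ ?_ ?_
          · rintro ⟨i, j⟩ hp
            simp only [Finset.mem_sigma, Finset.mem_range] at hp
            simp only [hA, Finset.mem_filter, Finset.mem_product, Finset.mem_range]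
            omega
          · rintro ⟨a, b, c⟩ hq
            simp only [hA, Finset.mem_filter, Finset.mem_product, Finset.mem_range] at hq
            simp only [Finset.mem_sigma, Finset.mem_range]
            omega
          · rintro ⟨i, j⟩ hp
            simp only [Finset.mem_sigma, Finset.mem_range] at hp
            simp only [Sigma.mk.inj_iff, heq_eq_eq, and_true]
            omega
          · rintro ⟨a, b, c⟩ hq
            simp only [hA, Finset.mem_filter, Finset.mem_product, Finset.mem_range] at hq
            simp only [Prod.mk.injEq, eq_self_iff_true, true_and, and_true]
            omega
          · exact fun p _ => rfl
        have hmemσ : ∀ p ∈ A, (p.2.2, p.1, p.2.1) ∈ A := by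
          rintro ⟨a, b, c⟩ hq
          simp only [hA, Finset.mem_filter, Finset.mem_product, Finset.mem_range] at hq ⊢
          omega
        have hcyc1 : ∑ p ∈ A, F p = ∑ p ∈ A, F (p.2.1, p.2.2, p.1) := by
          refine Finset.sum_nbij' (fun p => (p.2.2, p.1, p.2.1))
            (fun p => (p.2.1, p.2.2, p.1)) hmemσ ?_ ?_ ?_ ?_
          · rintro ⟨a, b, c⟩ hq
            simp only [hA, Finset.mem_filter, Finset.mem_product, Finset.mem_range] at hq ⊢
            omega
          · rintro ⟨a, b, c⟩ _; rfl
          · rintro ⟨a, b, c⟩ _; rfl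
          · rintro ⟨a, b, c⟩ _; rfl
        have hcyc2 : ∑ p ∈ A, F p = ∑ p ∈ A, F (p.2.2, p.1, p.2.1) := by
          refine Finset.sum_nbij' (fun p => (p.2.1, p.2.2, p.1))
            (fun p => (p.2.2, p.1, p.2.1)) ?_ hmemσ ?_ ?_ ?_
          · rintro ⟨a, b, c⟩ hq
            simp only [hA, Finset.mem_filter, Finset.mem_product, Finset.mem_range] at hq ⊢
            omega
          · rintro ⟨a, b, c⟩ _; rfl
          · rintro ⟨a, b, c⟩ _; rfl
          · rintro ⟨a, b, c⟩ _; rfl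
        have h3sum : (∑ p ∈ A, F p) + (∑ p ∈ A, F p) + (∑ p ∈ A, F p) = 0 := by
          nth_rewrite 2 [hcyc1]
          nth_rewrite 2 [hcyc2]
          rw [← Finset.sum_add_distrib, ← Finset.sum_add_distrib]
          refine Finset.sum_eq_zero fun p _ => ?_
          exact hJacobi (T p.1) (T p.2.1) (T p.2.2)
        have h3' : (3 : K) • (∑ p ∈ A, F p) = 0 := by
          rw [show (3 : K) = 1 + 1 + 1 by norm_num, add_smul, add_smul, one_smul]
          exact h3sum
        have hS : ∑ p ∈ A, F p = 0 := by
          rcases smul_eq_zero.mp h3' with h | h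
          · exact absurd h (by norm_num)
          · exact h
        rw [htriple, hS]
      -- step 2: each term rewrites via the induction hypothesis
      have hterm : ∀ i ∈ Finset.range (n + 1),
          β (d1 (T i)) (T (n - i)) = -((2 : K)⁻¹ • β (C i) (T (n - i))) := by
        intro i hi
        have hi' : i ≤ n := by simpa [Nat.lt_succ_iff] using hi
        rcases eq_or_lt_of_le hi' with rfl | hlt
        · simp [hT0]
        · have hdi : d1 (T i) = -((2 : K)⁻¹ • C i) :=
            eq_neg_of_add_eq_zero_left (IH i hlt)
          rw [hdi]
          simp
      have hsingle : ∑ i ∈ Finset.range (n + 1), β (d1 (T i)) (T (n - i)) = 0 := by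
        rw [Finset.sum_congr rfl hterm]
        simp only [← neg_smul]
        rw [← Finset.smul_sum, hsum0, smul_zero]
      -- step 3: d2 (C n) = 0
      have key : d2 (C n) = 0 := by
        have hd2 : d2 (C n)
            = ∑ i ∈ Finset.range (n + 1),
                (β (d1 (T i)) (T (n - i)) + β (d1 (T (n - i))) (T i)) := by
          rw [hC, map_sum]
          exact Finset.sum_congr rfl fun i _ => hLeibniz _ _
        have hrefl : ∑ i ∈ Finset.range (n + 1), β (d1 (T (n - i))) (T i)
            = ∑ i ∈ Finset.range (n + 1), β (d1 (T i)) (T (n - i)) := by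
          rw [← Finset.sum_range_reflect (fun j => β (d1 (T j)) (T (n - j))) (n + 1)]
          refine Finset.sum_congr rfl fun i hi => ?_
          have hi' : i ≤ n := by simpa [Nat.lt_succ_iff] using hi
          simp [Nat.succ_sub_one, Nat.sub_sub_self hi']
        rw [hd2, Finset.sum_add_distrib, hrefl, hsingle, add_zero]
      -- step 4: conclude using the SDR relation and vanishing obstruction
      have hτn : T n = -((2 : K)⁻¹ • h2 (C n)) := by
        rw [hTn n hnpos]
        have h2le : (2 : ℕ+) ≤ ⟨n, hnpos⟩ := by
          exact (PNat.coe_le_coe 2 ⟨n, hnpos⟩).mp (by simp [hn])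
        rw [hrec ⟨n, hnpos⟩ h2le, hCb ⟨n, hnpos⟩]
        rfl
      have hπ2Cn : π2 (C n) = 0 := by
        have := hobs ⟨n, hnpos⟩
        rwa [hCb ⟨n, hnpos⟩] at this
      have hsdr := LinearMap.congr_fun hSDR2 (C n)
      simp only [LinearMap.add_apply, LinearMap.comp_apply, LinearMap.sub_apply,
        LinearMap.id_apply] at hsdr
      rw [key, map_zero, add_zero, hπ2Cn, map_zero, sub_zero] at hsdr
      rw [hτn, map_neg, map_smul, hsdr, neg_add_cancel]
  intro b
  rw [hCb]
  have := main (b : ℕ)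
  rwa [hTn (b : ℕ) b.pos] at this
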